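/- Let y₁ < y₂ < ... < yₙ be real numbers with n > 4 and let 2 ≤ i ≤ n−2. Among all 2-partitions (P₁, P₂) of {y₁, ..., yₙ} with |P₁| = i and |P₂| = n−i, the loss L(P₁, P₂) = SS(P₁) + SS(P₂) attains its minimum only at the contiguous partition P₁* = {y₁, ..., yᵢ}, P₂* = {y_{i+1}, ..., yₙ} or at the contiguous partition P₁** = {y₁, ..., y_{n−i}}, P₂** = {y_{n−i+1}, ..., yₙ} (the latter corresponding to sizes (n−i, i)). -/

import Mathlib

open Finset

/-- Mean of the values of `y` over an index set. -/
noncomputable def mu {n : ℕ} (y : Fin n → ℝ) (P : Finset (Fin n)) : ℝ :=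
  (∑ j ∈ P, y j) / P.card

/-- In-group sum of squared deviations from the mean. -/
noncomputable def SS {n : ℕ} (y : Fin n → ℝ) (P : Finset (Fin n)) : ℝ :=
  ∑ j ∈ P, (y j - mu y P) ^ 2

lemma SS_eq {n : ℕ} (y : Fin n → ℝ) (P : Finset (Fin n)) (hP : P.Nonempty) :
    SS y P = ∑ j ∈ P, (y j)^2 - (∑ j ∈ P, y j)^2 / P.card := by
  have hc : (P.card : ℝ) ≠ 0 := by
    exact_mod_cast (Finset.card_pos.mpr hP).ne'
  unfold SS mu
  have : ∀ j ∈ P, (y j - (∑ k ∈ P, y k) / P.card) ^ 2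
      = (y j)^2 - 2 * ((∑ k ∈ P, y k) / P.card) * y j + ((∑ k ∈ P, y k) / P.card)^2 := by
    intro j _; ring
  rw [Finset.sum_congr rfl this]
  rw [Finset.sum_add_distrib, Finset.sum_sub_distrib, Finset.sum_const, ← Finset.mul_sum]
  field_simp
  rw [nsmul_eq_mul]
  field_simp
  ring

lemma exchange {n : ℕ} (y : Fin n → ℝ) (A : Finset (Fin n))
    (h : ∀ k ∈ A, ∀ j ∉ A, y k < y j) :
    ∀ m : ℕ, ∀ Q : Finset (Fin n), (Q \ A).card = m → Q.card = A.card → Q ≠ A →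
      ∑ j ∈ A, y j < ∑ j ∈ Q, y j := by
  intro m
  induction m with
  | zero =>
    intro Q hm hcard hne
    exfalso
    have hsub : Q ⊆ A := by
      rw [← Finset.sdiff_eq_empty_iff_subset]
      exact Finset.card_eq_zero.mp hm
    exact hne (Finset.eq_of_subset_of_card_le hsub hcard.ge)
  | succ m ih =>
    intro Q hm hcard hne
    have hQA : (Q \ A).Nonempty := by
      rw [← Finset.card_pos, hm]; omega
    obtain ⟨j, hj⟩ := hQA
    have hjQ : j ∈ Q := (Finset.mem_sdiff.mp hj).1
    have hjA : j ∉ A := (Finset.mem_sdiff.mp hj).2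
    have hAQ : (A \ Q).Nonempty := by
      rw [← Finset.card_pos]
      have h1 : (Q \ A).card + (Q ∩ A).card = Q.card := Finset.card_sdiff_add_card_inter Q A
      have h2 : (A \ Q).card + (A ∩ Q).card = A.card := Finset.card_sdiff_add_card_inter A Q
      rw [Finset.inter_comm] at h2
      omega
    obtain ⟨k, hk⟩ := hAQ
    have hkA : k ∈ A := (Finset.mem_sdiff.mp hk).1
    have hkQ : k ∉ Q := (Finset.mem_sdiff.mp hk).2
    set Q' := insert k (Q.erase j) with hQ'def
    have hkQe : k ∉ Q.erase j := fun hh => hkQ (Finset.mem_of_mem_erase hh)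
    have hcard' : Q'.card = A.card := by
      rw [hQ'def, Finset.card_insert_of_notMem hkQe, Finset.card_erase_of_mem hjQ, ← hcard]
      have : 0 < Q.card := Finset.card_pos.mpr ⟨j, hjQ⟩
      omega
    have hsum' : ∑ x ∈ Q', y x = y k + (∑ x ∈ Q, y x - y j) := by
      rw [hQ'def, Finset.sum_insert hkQe, Finset.sum_erase_eq_sub hjQ]
    have hlt : y k < y j := h k hkA j hjA
    have hsumlt : ∑ x ∈ Q', y x < ∑ x ∈ Q, y x := by rw [hsum']; linarith
    have hm' : (Q' \ A).card = m := by
      have : Q' \ A = (Q \ A).erase j := by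
        rw [hQ'def]
        ext x
        simp only [Finset.mem_sdiff, Finset.mem_insert, Finset.mem_erase]
        constructor
        · rintro ⟨hx1 | hx1, hx2⟩
          · exact absurd (hx1 ▸ hkA) hx2
          · exact ⟨hx1.1, hx1.2, hx2⟩
        · rintro ⟨hx1, hx2, hx3⟩
          exact ⟨Or.inr ⟨hx1, hx2⟩, hx3⟩
      rw [this, Finset.card_erase_of_mem hj, hm]; omega
    by_cases hQ'A : Q' = A
    · rw [← hQ'A]; exact hsumlt
    · exact lt_trans (ih Q' hm' hcard' hQ'A) hsumlt

lemma card_lt_filter {n i : ℕ} (hin : i ≤ n) :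
    (univ.filter (fun j : Fin n => (j : ℕ) < i)).card = i := by
  have : (univ.filter (fun j : Fin n => (j : ℕ) < i)) = Finset.map (Fin.castLEEmb hin) univ := by
    ext j
    simp only [Finset.mem_filter, Finset.mem_univ, true_and, Finset.mem_map,
      Fin.castLEEmb_apply]
    constructor
    · intro hj; exact ⟨⟨j.val, hj⟩, by simp [Fin.ext_iff]⟩
    · rintro ⟨k, rfl⟩; exact k.isLt
  rw [this, Finset.card_map, Finset.card_univ, Fintype.card_fin]

lemma compl_filter_lt {n i : ℕ} :
    univ \ (univ.filter (fun j : Fin n => (j : ℕ) < i)) =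
      univ.filter (fun j : Fin n => i ≤ (j : ℕ)) := by
  ext j; simp [not_lt]

lemma compl_filter_ge {n i : ℕ} :
    univ \ (univ.filter (fun j : Fin n => i ≤ (j : ℕ))) =
      univ.filter (fun j : Fin n => (j : ℕ) < i) := by
  ext j; simp [not_le]

theorem stmt_1 (n i : ℕ) (hn : 4 < n) (hi : 2 ≤ i) (hi' : i ≤ n - 2)
    (y : Fin n → ℝ) (hy : StrictMono y)
    (P₁ P₂ : Finset (Fin n)) (hdisj : Disjoint P₁ P₂) (hunion : P₁ ∪ P₂ = univ)
    (hcard : P₁.card = i)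
    (hmin : ∀ Q₁ Q₂ : Finset (Fin n), Disjoint Q₁ Q₂ → Q₁ ∪ Q₂ = univ →
      Q₁.card = i → SS y P₁ + SS y P₂ ≤ SS y Q₁ + SS y Q₂) :
    (P₁ = univ.filter (fun j : Fin n => (j : ℕ) < i) ∧
      P₂ = univ.filter (fun j : Fin n => i ≤ (j : ℕ))) ∨
    (P₁ = univ.filter (fun j : Fin n => n - i ≤ (j : ℕ)) ∧
      P₂ = univ.filter (fun j : Fin n => (j : ℕ) < n - i)) := by
  have hin : i ≤ n := by omega
  have hni : 2 ≤ n - i := by omega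
  have hP2 : P₂ = univ \ P₁ := by
    ext j
    simp only [Finset.mem_sdiff, Finset.mem_univ, true_and]
    constructor
    · intro h h1
      exact (Finset.disjoint_left.mp hdisj h1) h
    · intro h
      rcases Finset.mem_union.mp (hunion ▸ Finset.mem_univ j) with h1 | h1
      · exact absurd h1 h
      · exact h1
  set A := univ.filter (fun j : Fin n => (j : ℕ) < i) with hA
  set B := univ.filter (fun j : Fin n => n - i ≤ (j : ℕ)) with hB
  have cardA : A.card = i := card_lt_filter hin
  have cardB : B.card = i := by
    have h1 : univ \ (univ.filter (fun j : Fin n => (j : ℕ) < n - i)) = B := compl_filter_lt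
    have h2 : (univ.filter (fun j : Fin n => (j : ℕ) < n - i)).card = n - i :=
      card_lt_filter (by omega)
    rw [← h1, Finset.card_sdiff_of_subset (Finset.subset_univ _), Finset.card_univ, Fintype.card_fin, h2]
    omega
  by_cases h1 : P₁ = A
  · left
    exact ⟨h1, by rw [hP2, h1, hA, compl_filter_lt]⟩
  by_cases h2 : P₁ = B
  · right
    refine ⟨h2, ?_⟩
    rw [hP2, h2, hB, compl_filter_ge]
  exfalso
  -- strict sum inequalities
  have propA : ∀ k ∈ A, ∀ j ∉ A, y k < y j := by
    intro k hk j hj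
    rw [hA, Finset.mem_filter] at hk
    rw [hA, Finset.mem_filter] at hj
    apply hy
    have hk' : (k : ℕ) < i := hk.2
    have hj' : ¬ (j : ℕ) < i := fun hh => hj ⟨Finset.mem_univ j, hh⟩
    exact Fin.lt_def.mpr (by omega)
  have propB : ∀ k ∈ B, ∀ j ∉ B, (fun x => -y x) k < (fun x => -y x) j := by
    intro k hk j hj
    rw [hB, Finset.mem_filter] at hk
    rw [hB, Finset.mem_filter] at hj
    simp only [neg_lt_neg_iff]
    apply hy
    have hk' : n - i ≤ (k : ℕ) := hk.2
    have hj' : ¬ n - i ≤ (j : ℕ) := fun hh => hj ⟨Finset.mem_univ j, hh⟩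
    exact Fin.lt_def.mpr (by omega)
  have hsA : ∑ j ∈ A, y j < ∑ j ∈ P₁, y j :=
    exchange y A propA (P₁ \ A).card P₁ rfl (hcard.trans cardA.symm) h1
  have hsB : ∑ j ∈ P₁, y j < ∑ j ∈ B, y j := by
    have := exchange (fun x => -y x) B propB (P₁ \ B).card P₁ rfl (hcard.trans cardB.symm) h2
    simp only [Finset.sum_neg_distrib] at this
    linarith
  -- loss formula
  have ha : (0:ℝ) < (i:ℝ) := by exact_mod_cast (by omega : 0 < i)
  have hb : (0:ℝ) < ((n - i : ℕ):ℝ) := by exact_mod_cast (by omega : 0 < n - i)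
  have key : ∀ Q : Finset (Fin n), Q.card = i →
      SS y Q + SS y (univ \ Q) =
        ∑ j ∈ univ, (y j)^2 - (∑ j ∈ Q, y j)^2 / (i:ℝ)
          - (∑ j ∈ univ, y j - ∑ j ∈ Q, y j)^2 / ((n - i : ℕ):ℝ) := by
    intro Q hQ
    have hQc : (univ \ Q).card = n - i := by
      rw [Finset.card_sdiff_of_subset (Finset.subset_univ Q), Finset.card_univ, Fintype.card_fin, hQ]
    have hQne : Q.Nonempty := Finset.card_pos.mp (by omega)
    have hQcne : (univ \ Q).Nonempty := Finset.card_pos.mp (by omega)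
    rw [SS_eq y Q hQne, SS_eq y _ hQcne,
      Finset.sum_sdiff_eq_sub (Finset.subset_univ Q) (f := fun j => (y j)^2),
      Finset.sum_sdiff_eq_sub (Finset.subset_univ Q) (f := y), hQ, hQc]
    ring
  have hlossA := hmin A (univ \ A) Finset.disjoint_sdiff
    (Finset.union_sdiff_of_subset (Finset.subset_univ A)) cardA
  have hlossB := hmin B (univ \ B) Finset.disjoint_sdiff
    (Finset.union_sdiff_of_subset (Finset.subset_univ B)) cardB
  rw [hP2] at hlossA hlossB
  rw [key P₁ hcard, key A cardA] at hlossA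
  rw [key P₁ hcard, key B cardB] at hlossB
  set T := ∑ j ∈ univ, y j
  set s := ∑ j ∈ P₁, y j
  set s1 := ∑ j ∈ A, y j
  set s2 := ∑ j ∈ B, y j
  set a := (i:ℝ)
  set b := ((n - i : ℕ):ℝ)
  have hA' : b * s1^2 + a * (T - s1)^2 ≤ b * s^2 + a * (T - s)^2 := by
    have h : s1^2 / a + (T - s1)^2 / b ≤ s^2 / a + (T - s)^2 / b := by linarith
    have h' := mul_le_mul_of_nonneg_left h (le_of_lt (mul_pos ha hb))
    field_simp at h'
    nlinarith [h']
  have hB' : b * s2^2 + a * (T - s2)^2 ≤ b * s^2 + a * (T - s)^2 := by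
    have h : s2^2 / a + (T - s2)^2 / b ≤ s^2 / a + (T - s)^2 / b := by linarith
    have h' := mul_le_mul_of_nonneg_left h (le_of_lt (mul_pos ha hb))
    field_simp at h'
    nlinarith [h']
  nlinarith [mul_nonneg (sub_nonneg.mpr hA') (le_of_lt (sub_pos.mpr hsB)),
    mul_nonneg (sub_nonneg.mpr hB') (le_of_lt (sub_pos.mpr hsA)),
    mul_pos (sub_pos.mpr hsA) (sub_pos.mpr hsB),
    mul_pos (mul_pos (sub_pos.mpr hsA) (sub_pos.mpr hsB)) (add_pos ha hb),
    mul_pos (mul_pos (mul_pos (sub_pos.mpr hsA) (sub_pos.mpr hsB)) (add_pos ha hb)) (sub_pos.mpr (lt_trans hsA hsB))]
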